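/- Let K ⊂ R^n be a smooth convex body (every boundary point has a unique outer unit normal) and L any convex body in R^n, and define K_t := K + tL for t ≥ 0 and K_t := K ⊖ (-t)L for t < 0 (assumed nonempty for small |t|). Then (h_{K_t} - h_K)/t converges to h_L uniformly on S^{n-1} as t → 0; in particular, the map t ↦ h_{K_t}(u) is differentiable at t = 0 with derivative h_L(u), uniformly in u. -/

import Mathlib

open Set Pointwise Filter
open scoped Topology

noncomputable def suppFn {n : ℕ} (K : Set (EuclideanSpace ℝ (Fin n)))
    (u : EuclideanSpace ℝ (Fin n)) : ℝ :=
  sSup ((fun x => (inner ℝ x u : ℝ)) '' K)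

def minkDiff {n : ℕ} (K L : Set (EuclideanSpace ℝ (Fin n))) :
    Set (EuclideanSpace ℝ (Fin n)) :=
  {x | ∀ y ∈ L, y + x ∈ K}

variable {n : ℕ}

lemma suppFn_eq_of_max {K : Set (EuclideanSpace ℝ (Fin n))} {u x : EuclideanSpace ℝ (Fin n)}
    (hx : x ∈ K) (hmax : ∀ y ∈ K, (inner ℝ y u : ℝ) ≤ (inner ℝ x u : ℝ)) :
    suppFn K u = inner ℝ x u := by
  apply le_antisymm
  · apply csSup_le ⟨_, mem_image_of_mem _ hx⟩
    rintro _ ⟨y, hy, rfl⟩; exact hmax y hy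
  · exact le_csSup ⟨_, by rintro _ ⟨y, hy, rfl⟩; exact hmax y hy⟩ (mem_image_of_mem _ hx)

lemma exists_suppFn_max {K : Set (EuclideanSpace ℝ (Fin n))} (hK : IsCompact K)
    (hKne : K.Nonempty) (u : EuclideanSpace ℝ (Fin n)) :
    ∃ x ∈ K, suppFn K u = (inner ℝ x u : ℝ) ∧ ∀ y ∈ K, (inner ℝ y u : ℝ) ≤ (inner ℝ x u : ℝ) := by
  obtain ⟨x, hx, hmax⟩ := hK.exists_isMaxOn (f := fun y => (inner ℝ y u : ℝ)) hKne
    ((continuous_id.inner continuous_const).continuousOn)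
  exact ⟨x, hx, suppFn_eq_of_max hx hmax, hmax⟩

lemma le_suppFn {K : Set (EuclideanSpace ℝ (Fin n))} (hK : IsCompact K)
    {x : EuclideanSpace ℝ (Fin n)} (hx : x ∈ K) (u : EuclideanSpace ℝ (Fin n)) :
    (inner ℝ x u : ℝ) ≤ suppFn K u :=
  le_csSup ((hK.image (continuous_id.inner continuous_const)).bddAbove) (mem_image_of_mem _ hx)

lemma suppFn_add_smul {K L : Set (EuclideanSpace ℝ (Fin n))} (hK : IsCompact K)
    (hKne : K.Nonempty) (hL : IsCompact L) (hLne : L.Nonempty) {t : ℝ} (ht : 0 ≤ t)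
    (u : EuclideanSpace ℝ (Fin n)) :
    suppFn (K + t • L) u = suppFn K u + t * suppFn L u := by
  obtain ⟨x, hx, hxe, hxm⟩ := exists_suppFn_max hK hKne u
  obtain ⟨y, hy, hye, hym⟩ := exists_suppFn_max hL hLne u
  have hmem : x + t • y ∈ K + t • L :=
    Set.mem_add.2 ⟨x, hx, t • y, smul_mem_smul_set hy, rfl⟩
  have hmax : ∀ z ∈ K + t • L, (inner ℝ z u : ℝ) ≤ (inner ℝ (x + t • y) u : ℝ) := by
    rintro z hz
    obtain ⟨a, ha, b, hb, rfl⟩ := Set.mem_add.1 hz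
    obtain ⟨l, hl, rfl⟩ := mem_smul_set.1 hb
    rw [inner_add_left, inner_add_left, real_inner_smul_left, real_inner_smul_left]
    have := hxm a ha
    have := mul_le_mul_of_nonneg_left (hym l hl) ht
    linarith
  rw [suppFn_eq_of_max hmem hmax, hxe, hye, inner_add_left, real_inner_smul_left]
lemma key_lower {K L : Set (EuclideanSpace ℝ (Fin n))}
    (hKconv : Convex ℝ K) (hKcomp : IsCompact K) (hKint : (interior K).Nonempty)
    (hLcomp : IsCompact L) (hLne : L.Nonempty)
    (hsmooth : ∀ x ∈ frontier K, ∃! u : Metric.sphere (0 : EuclideanSpace ℝ (Fin n)) 1,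
      ∀ y ∈ K, (inner ℝ y ((u : EuclideanSpace ℝ (Fin n))) : ℝ)
        ≤ (inner ℝ x ((u : EuclideanSpace ℝ (Fin n))) : ℝ))
    {ε' : ℝ} (hε' : 0 < ε') :
    ∃ s₀ : ℝ, 0 < s₀ ∧ ∀ s : ℝ, 0 < s → s < s₀ → ∀ u : EuclideanSpace ℝ (Fin n), ‖u‖ = 1 →
      suppFn K u - s * suppFn L u - ε' * s ≤ suppFn (minkDiff K (s • L)) u := by
  have hKne : K.Nonempty := hKint.mono interior_subset
  by_contra hcon
  push_neg at hcon
  choose s hs0 hss u hu hlt using fun k : ℕ => hcon (1 / ((k : ℝ) + 1)) (by positivity)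
  obtain ⟨M, hM⟩ := hLcomp.isBounded.exists_norm_le
  have hM0 : 0 ≤ M := le_trans (norm_nonneg _) (hM _ hLne.choose_spec)
  set C : ℝ := 2 * M + ε' with hCdef
  have hCpos : 0 < C := by positivity
  -- maximizers
  choose x hxK hxe hxm using fun k => exists_suppFn_max hKcomp hKne (u k)
  choose y hyK hye hym using fun k => exists_suppFn_max hLcomp hLne (u k)
  have huu : ∀ k, (inner ℝ (u k) (u k) : ℝ) = 1 := by
    intro k; rw [real_inner_self_eq_norm_mul_norm, hu k]; ring
  -- the candidate point is not in the Minkowski difference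
  have hz : ∀ k, ∃ l ∈ L,
      s k • l + (x k - s k • y k - (s k * ε') • u k) ∉ K := by
    intro k
    by_contra hcon2
    push_neg at hcon2
    have zmem : (x k - s k • y k - (s k * ε') • u k) ∈ minkDiff K (s k • L) := by
      intro v hv
      obtain ⟨l, hl, rfl⟩ := mem_smul_set.1 hv
      exact hcon2 l hl
    have hbdd : ∀ w ∈ minkDiff K (s k • L),
        (inner ℝ w (u k) : ℝ) ≤ suppFn K (u k) - s k * inner ℝ (y k) (u k) := by
      intro w hw
      have h1 : s k • y k + w ∈ K := hw _ (smul_mem_smul_set (hyK k))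
      have h2 := le_suppFn hKcomp h1 (u k)
      rw [inner_add_left, real_inner_smul_left] at h2
      linarith
    have h3 : (inner ℝ (x k - s k • y k - (s k * ε') • u k) (u k) : ℝ)
        ≤ suppFn (minkDiff K (s k • L)) (u k) :=
      le_csSup ⟨_, by rintro _ ⟨w, hw, rfl⟩; exact hbdd w hw⟩ (mem_image_of_mem _ zmem)
    rw [inner_sub_left, inner_sub_left, real_inner_smul_left, real_inner_smul_left, huu k] at h3
    have h4 := hlt k
    rw [hxe k, hye k] at h4
    linarith
  choose l hlL hlnK using hz
  set w : ℕ → EuclideanSpace ℝ (Fin n) :=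
    fun k => s k • l k - s k • y k - (s k * ε') • u k with hwdef
  have hqK : ∀ k, x k + w k ∉ K := by
    intro k hk
    apply hlnK k
    have : s k • l k + (x k - s k • y k - (s k * ε') • u k) = x k + w k := by
      rw [hwdef]; module
    rw [this]; exact hk
  have hwu : ∀ k, (inner ℝ (w k) (u k) : ℝ) ≤ -(ε' * s k) := by
    intro k
    have h1 : (inner ℝ (l k) (u k) : ℝ) ≤ inner ℝ (y k) (u k) := hym k _ (hlL k)
    have h2 := mul_le_mul_of_nonneg_left h1 (le_of_lt (hs0 k))
    rw [hwdef]
    simp only [inner_sub_left, real_inner_smul_left, huu k]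
    nlinarith [hs0 k]
  have hwn : ∀ k, ‖w k‖ ≤ s k * C := by
    intro k
    have h1 : ‖w k‖ ≤ ‖s k • l k‖ + ‖s k • y k‖ + ‖(s k * ε') • u k‖ := by
      rw [hwdef]
      refine le_trans (norm_sub_le _ _) ?_
      have := norm_sub_le (s k • l k) (s k • y k)
      linarith
    have e1 : ‖s k • l k‖ = s k * ‖l k‖ := by
      rw [norm_smul, Real.norm_eq_abs, abs_of_pos (hs0 k)]
    have e2 : ‖s k • y k‖ = s k * ‖y k‖ := by
      rw [norm_smul, Real.norm_eq_abs, abs_of_pos (hs0 k)]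
    have e3 : ‖(s k * ε') • u k‖ = s k * ε' := by
      rw [norm_smul, Real.norm_eq_abs, abs_of_pos (mul_pos (hs0 k) hε'), hu k, mul_one]
    rw [e1, e2, e3] at h1
    have h2 := hM _ (hlL k)
    have h3 := hM _ (hyK k)
    have := hs0 k
    nlinarith
  have hwpos : ∀ k, 0 < ‖w k‖ := by
    intro k
    have h1 := abs_real_inner_le_norm (w k) (u k)
    have h2 := hwu k
    have h3 := hs0 k
    rw [hu k, mul_one] at h1
    have h4 : -(inner ℝ (w k) (u k) : ℝ) ≤ ‖w k‖ := by
      have := neg_abs_le (inner ℝ (w k) (u k) : ℝ)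
      linarith
    nlinarith
  -- separating hyperplanes
  have hsep : ∀ k, ∃ v : EuclideanSpace ℝ (Fin n), ‖v‖ = 1 ∧
      ∀ a ∈ K, (inner ℝ a v : ℝ) < inner ℝ (x k + w k) v := by
    intro k
    obtain ⟨f, c, hfc, hcq⟩ := geometric_hahn_banach_closed_point hKconv hKcomp.isClosed (hqK k)
    set g := (InnerProductSpace.toDual ℝ (EuclideanSpace ℝ (Fin n))).symm f with hgdef
    have hg : ∀ v, (inner ℝ g v : ℝ) = f v := fun v => InnerProductSpace.toDual_symm_apply
    have hgne : g ≠ 0 := by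
      intro h0
      have h1 := hfc _ (hxK k)
      have h2 := hg (x k)
      have h3 := hg (x k + w k)
      rw [h0, inner_zero_left] at h2 h3
      linarith
    have hgnorm : 0 < ‖g‖ := norm_pos_iff.2 hgne
    refine ⟨‖g‖⁻¹ • g, ?_, ?_⟩
    · rw [norm_smul, Real.norm_eq_abs, abs_of_pos (by positivity), inv_mul_cancel₀ (ne_of_gt hgnorm)]
    · intro a ha
      have ha' : (inner ℝ a g : ℝ) = f a := by rw [real_inner_comm]; exact hg a
      have hq' : (inner ℝ (x k + w k) g : ℝ) = f (x k + w k) := by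
        rw [real_inner_comm]; exact hg _
      have h1 : (inner ℝ a g : ℝ) < inner ℝ (x k + w k) g := by
        rw [ha', hq']; exact lt_trans (hfc a ha) hcq
      rw [real_inner_smul_right, real_inner_smul_right]
      exact mul_lt_mul_of_pos_left h1 (by positivity)
  choose nn hn1 hnlt using hsep
  set d : ℕ → EuclideanSpace ℝ (Fin n) := fun k => ‖w k‖⁻¹ • w k with hddef
  have hd1 : ∀ k, ‖d k‖ = 1 := by
    intro k
    simp only [hddef, norm_smul, norm_inv, norm_norm]
    exact inv_mul_cancel₀ (ne_of_gt (hwpos k))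
  have hdu : ∀ k, (inner ℝ (d k) (u k) : ℝ) ≤ -(ε' / C) := by
    intro k
    have h1 : (inner ℝ (w k) (u k) : ℝ) ≤ -((ε' / C) * ‖w k‖) := by
      have h2 : (ε' / C) * ‖w k‖ ≤ (ε' / C) * (s k * C) :=
        mul_le_mul_of_nonneg_left (hwn k) (by positivity)
      have h3 : (ε' / C) * (s k * C) = ε' * s k := by field_simp
      have := hwu k
      linarith
    have h4 : (inner ℝ (d k) (u k) : ℝ) = ‖w k‖⁻¹ * inner ℝ (w k) (u k) := by
      rw [hddef]; exact real_inner_smul_left _ _ _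
    rw [h4]
    have h5 : ‖w k‖⁻¹ * (inner ℝ (w k) (u k) : ℝ) ≤ ‖w k‖⁻¹ * (-((ε' / C) * ‖w k‖)) :=
      mul_le_mul_of_nonneg_left h1 (by positivity)
    have h6 : ‖w k‖⁻¹ * (-((ε' / C) * ‖w k‖)) = -(ε' / C) := by
      rw [mul_neg, mul_comm (ε' / C) ‖w k‖, ← mul_assoc,
        inv_mul_cancel₀ (ne_of_gt (hwpos k)), one_mul]
    linarith
  have hdn : ∀ k, 0 ≤ (inner ℝ (d k) (nn k) : ℝ) := by
    intro k
    have h1 := hnlt k _ (hxK k)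
    rw [inner_add_left] at h1
    have h2 : 0 < (inner ℝ (w k) (nn k) : ℝ) := by linarith
    have h3 : (inner ℝ (d k) (nn k) : ℝ) = ‖w k‖⁻¹ * inner ℝ (w k) (nn k) := by
      rw [hddef]; exact real_inner_smul_left _ _ _
    rw [h3]; positivity
  -- compactness and subsequence
  set S := Metric.sphere (0 : EuclideanSpace ℝ (Fin n)) 1 with hSdef
  have hScomp : IsCompact (S ×ˢ (K ×ˢ (S ×ˢ S))) :=
    (isCompact_sphere _ _).prod (hKcomp.prod ((isCompact_sphere _ _).prod (isCompact_sphere _ _)))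
  have hmem : ∀ k, (u k, x k, nn k, d k) ∈ S ×ˢ (K ×ˢ (S ×ˢ S)) := by
    intro k
    exact ⟨mem_sphere_zero_iff_norm.2 (hu k), hxK k,
      mem_sphere_zero_iff_norm.2 (hn1 k), mem_sphere_zero_iff_norm.2 (hd1 k)⟩
  obtain ⟨⟨uF, xF, nF, dF⟩, hlmem, φ, hφ, hconv⟩ := hScomp.tendsto_subseq hmem
  obtain ⟨hu0S, hx0K, hn0S, hd0S⟩ := hlmem
  have hu0 : ‖uF‖ = 1 := mem_sphere_zero_iff_norm.1 hu0S
  -- component convergence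
  have hcu : Tendsto (fun k => u (φ k)) atTop (𝓝 uF) :=
    (continuous_fst.tendsto _).comp hconv
  have hcx : Tendsto (fun k => x (φ k)) atTop (𝓝 xF) :=
    ((continuous_fst.comp continuous_snd).tendsto _).comp hconv
  have hcn : Tendsto (fun k => nn (φ k)) atTop (𝓝 nF) :=
    ((continuous_fst.comp (continuous_snd.comp continuous_snd)).tendsto _).comp hconv
  have hcd : Tendsto (fun k => d (φ k)) atTop (𝓝 dF) :=
    ((continuous_snd.comp (continuous_snd.comp continuous_snd)).tendsto _).comp hconv
  have hstend : Tendsto (fun k => s (φ k)) atTop (𝓝 0) := by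
    apply tendsto_of_tendsto_of_tendsto_of_le_of_le tendsto_const_nhds
      tendsto_one_div_add_atTop_nhds_zero_nat
    · exact fun k => le_of_lt (hs0 (φ k))
    · intro k
      have h1 : s (φ k) < 1 / ((φ k : ℝ) + 1) := hss (φ k)
      have h2 : (1 : ℝ) / ((φ k : ℝ) + 1) ≤ 1 / ((k : ℝ) + 1) := by
        apply one_div_le_one_div_of_le (by positivity)
        have := hφ.le_apply (x := k)
        exact_mod_cast add_le_add_left (Nat.cast_le.2 this) 1
      linarith
  have hwtend : Tendsto (fun k => w (φ k)) atTop (𝓝 0) := by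
    apply squeeze_zero_norm (fun k => hwn (φ k))
    have := hstend.mul_const C
    simpa using this
  have hqtend : Tendsto (fun k => x (φ k) + w (φ k)) atTop (𝓝 xF) := by
    have := hcx.add hwtend
    simpa using this
  -- limit inequalities
  have hA : ∀ z ∈ K, (inner ℝ z uF : ℝ) ≤ inner ℝ xF uF := by
    intro z hz
    exact le_of_tendsto_of_tendsto' (tendsto_const_nhds.inner hcu) (hcx.inner hcu)
      (fun k => hxm (φ k) z hz)
  have hB : ∀ z ∈ K, (inner ℝ z nF : ℝ) ≤ inner ℝ xF nF := by
    intro z hz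
    exact le_of_tendsto_of_tendsto' (tendsto_const_nhds.inner hcn) (hqtend.inner hcn)
      (fun k => le_of_lt (hnlt (φ k) z hz))
  have hC2 : (inner ℝ dF uF : ℝ) ≤ -(ε' / C) :=
    le_of_tendsto' (hcd.inner hcu) (fun k => hdu (φ k))
  have hD : 0 ≤ (inner ℝ dF nF : ℝ) :=
    ge_of_tendsto' (hcd.inner hcn) (fun k => hdn (φ k))
  -- x0 is a frontier point
  have hnotint : xF ∉ interior K := by
    intro hint
    obtain ⟨δ, hδ, hball⟩ := Metric.isOpen_iff.1 isOpen_interior _ hint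
    have hmem2 : xF + (δ / 2) • uF ∈ K := by
      apply interior_subset (hball ?_)
      rw [Metric.mem_ball, dist_eq_norm, add_sub_cancel_left, norm_smul, Real.norm_eq_abs,
        abs_of_pos (by linarith), hu0]
      linarith
    have h1 := hA _ hmem2
    rw [inner_add_left, real_inner_smul_left, real_inner_self_eq_norm_mul_norm, hu0] at h1
    linarith
  have hfr : xF ∈ frontier K := ⟨subset_closure hx0K, hnotint⟩
  -- smoothness gives the contradiction
  obtain ⟨v, hv, huniq⟩ := hsmooth xF hfr
  have h1 : (⟨uF, hu0S⟩ : Metric.sphere (0 : EuclideanSpace ℝ (Fin n)) 1) = v := huniq _ hA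
  have h2 : (⟨nF, hn0S⟩ : Metric.sphere (0 : EuclideanSpace ℝ (Fin n)) 1) = v := huniq _ hB
  have h3 : uF = nF := by
    have := h1.trans h2.symm
    exact congrArg Subtype.val this
  rw [← h3] at hD
  have : 0 < ε' / C := by positivity
  linarith

/-- Let `K ⊂ ℝⁿ` be a smooth convex body (every boundary point has a unique outer
unit normal) with nonempty interior, and `L` any convex body.  Set `K_t := K + tL` for `t ≥ 0`
and `K_t := K ⊖ (-t)L` for `t < 0` (nonempty for small `|t|`).  Then `(h_{K_t} - h_K)/t → h_L`
uniformly on `S^{n-1}` as `t → 0`. -/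
theorem support_derivative_uniform (n : ℕ)
    (K L : Set (EuclideanSpace ℝ (Fin n)))
    (hKconv : Convex ℝ K) (hKcomp : IsCompact K) (hKint : (interior K).Nonempty)
    (hLconv : Convex ℝ L) (hLcomp : IsCompact L) (hLne : L.Nonempty)
    (hsmooth : ∀ x ∈ frontier K, ∃! u : Metric.sphere (0 : EuclideanSpace ℝ (Fin n)) 1,
      ∀ y ∈ K, (inner ℝ y ((u : EuclideanSpace ℝ (Fin n))) : ℝ)
        ≤ (inner ℝ x ((u : EuclideanSpace ℝ (Fin n))) : ℝ))
    (hne : ∃ ε : ℝ, 0 < ε ∧ ∀ t : ℝ, -ε < t → t < 0 → (minkDiff K ((-t) • L)).Nonempty) :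
    TendstoUniformlyOn
      (fun (t : ℝ) (u : EuclideanSpace ℝ (Fin n)) =>
        (suppFn (if 0 ≤ t then K + t • L else minkDiff K ((-t) • L)) u - suppFn K u) / t)
      (fun u => suppFn L u) (𝓝[≠] (0 : ℝ))
      (Metric.sphere (0 : EuclideanSpace ℝ (Fin n)) 1) := by
  have hKne : K.Nonempty := hKint.mono interior_subset
  rw [Metric.tendstoUniformlyOn_iff]
  intro ε hε
  obtain ⟨ε₀, hε₀, hne'⟩ := hne
  obtain ⟨s₀, hs₀, hkey⟩ := key_lower hKconv hKcomp hKint hLcomp hLne hsmooth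
    (show (0:ℝ) < ε / 2 by positivity)
  have hball : Metric.ball (0:ℝ) (min ε₀ s₀) ∈ 𝓝 (0:ℝ) :=
    Metric.ball_mem_nhds _ (lt_min hε₀ hs₀)
  filter_upwards [mem_nhdsWithin_of_mem_nhds hball, self_mem_nhdsWithin] with t htb ht0
  intro v hv
  have ht0' : t ≠ 0 := ht0
  have hv1 : ‖v‖ = 1 := mem_sphere_zero_iff_norm.1 hv
  have htabs : |t| < min ε₀ s₀ := by
    simpa [Real.dist_eq] using htb
  obtain ⟨htl, htr⟩ := abs_lt.1 htabs
  rcases lt_or_gt_of_ne ht0' with htneg | htpos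
  · -- t < 0
    rw [if_neg (not_le.2 htneg)]
    have hspos : 0 < -t := by linarith
    have hmne : (minkDiff K ((-t) • L)).Nonempty := by
      apply hne' t ?_ htneg
      have := min_le_left ε₀ s₀
      linarith
    obtain ⟨yv, hyv, hyve, hyvm⟩ := exists_suppFn_max hLcomp hLne v
    set A := suppFn (minkDiff K ((-t) • L)) v with hAdef
    have hupper : A ≤ suppFn K v - (-t) * suppFn L v := by
      apply csSup_le (hmne.image _)
      rintro _ ⟨zc, hzc, rfl⟩
      have h1 : (-t) • yv + zc ∈ K := hzc _ (smul_mem_smul_set hyv)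
      have h2 := le_suppFn hKcomp h1 v
      rw [inner_add_left, real_inner_smul_left] at h2
      rw [hyve]
      simp only
      linarith
    have hlower : suppFn K v - (-t) * suppFn L v - (ε/2) * (-t) ≤ A := by
      apply hkey (-t) hspos ?_ v hv1
      rw [abs_of_neg htneg] at htabs
      have := min_le_right ε₀ s₀
      linarith
    have hQ : (A - suppFn K v) / t = (suppFn K v - A) / (-t) := by
      rw [div_eq_div_iff ht0' (show (-t) ≠ 0 by linarith)]
      ring
    rw [hQ]
    have h1 : suppFn L v ≤ (suppFn K v - A) / (-t) := by
      rw [le_div_iff₀ hspos]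
      linarith
    have h2 : (suppFn K v - A) / (-t) ≤ suppFn L v + ε / 2 := by
      rw [div_le_iff₀ hspos]
      nlinarith
    rw [Real.dist_eq, abs_sub_lt_iff]
    constructor <;> linarith
  · -- t > 0
    have hts : 0 ≤ t := le_of_lt htpos
    rw [if_pos hts, suppFn_add_smul hKcomp hKne hLcomp hLne hts]
    have heq : (suppFn K v + t * suppFn L v - suppFn K v) / t = suppFn L v := by
      field_simp
      ring
    rw [heq, dist_self]
    exact hε
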